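/- Let U ⊆ ℂ be open and connected, u : U → ℝ smooth, and suppose (ψ₁, ψ₂) : U → ℂ² is a nowhere-vanishing solution of the Dirac system ∂ψ₁/∂z̄ = u ψ₂, ∂ψ₂/∂z = −u ψ₁. Then the ℝ³-valued 1-form ω with complex components ω = Re[(ψ̄₂² − ψ₁²) dz], Im[(ψ̄₂² + ψ₁²) dz], 2 Re[ψ̄₂ ψ₁ dz] (the classical Weierstrass-type form) is closed: dω = 0. -/

import Mathlib

open Complex

/-- The Wirtinger operator ∂/∂z̄ = ½(∂/∂x + i ∂/∂y) of a map ℂ → ℂ, viewed as a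
real-differentiable map. -/
noncomputable def dzbar (f : ℂ → ℂ) (z : ℂ) : ℂ :=
  (1 / 2 : ℂ) * (fderiv ℝ f z 1 + Complex.I * fderiv ℝ f z Complex.I)

/-- The Wirtinger operator ∂/∂z = ½(∂/∂x − i ∂/∂y). -/
noncomputable def dz (f : ℂ → ℂ) (z : ℂ) : ℂ :=
  (1 / 2 : ℂ) * (fderiv ℝ f z 1 - Complex.I * fderiv ℝ f z Complex.I)

lemma dzbar_add {f g : ℂ → ℂ} {z : ℂ} (hf : DifferentiableAt ℝ f z)
    (hg : DifferentiableAt ℝ g z) :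
    dzbar (fun w => f w + g w) z = dzbar f z + dzbar g z := by
  simp only [dzbar, fderiv_fun_add hf hg, ContinuousLinearMap.add_apply]
  ring

lemma dzbar_sub {f g : ℂ → ℂ} {z : ℂ} (hf : DifferentiableAt ℝ f z)
    (hg : DifferentiableAt ℝ g z) :
    dzbar (fun w => f w - g w) z = dzbar f z - dzbar g z := by
  simp only [dzbar, fderiv_fun_sub hf hg, ContinuousLinearMap.sub_apply]
  ring

lemma dzbar_mul {f g : ℂ → ℂ} {z : ℂ} (hf : DifferentiableAt ℝ f z)
    (hg : DifferentiableAt ℝ g z) :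
    dzbar (fun w => f w * g w) z = dzbar f z * g z + f z * dzbar g z := by
  simp only [dzbar, fderiv_fun_mul hf hg, ContinuousLinearMap.add_apply,
    ContinuousLinearMap.smul_apply, smul_eq_mul]
  ring

lemma dzbar_conj {f : ℂ → ℂ} {z : ℂ} (hf : DifferentiableAt ℝ f z) :
    dzbar (fun w => starRingEnd ℂ (f w)) z = starRingEnd ℂ (dz f z) := by
  have h : fderiv ℝ (fun w => starRingEnd ℂ (f w)) z
      = (Complex.conjCLE : ℂ →L[ℝ] ℂ).comp (fderiv ℝ f z) := by
    exact (Complex.conjCLE.toContinuousLinearMap.hasFDerivAt.comp z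
      hf.hasFDerivAt).fderiv
  simp only [dzbar, dz, h, ContinuousLinearMap.coe_comp', Function.comp_apply,
    ContinuousLinearEquiv.coe_coe, Complex.conjCLE_apply, map_mul, map_sub,
    Complex.conj_I, map_one, Complex.conj_conj]
  rw [show (starRingEnd ℂ) (1/2 : ℂ) = 1/2 by rw [map_div₀, map_one, map_ofNat]]
  ring_nf

/- STATEMENT 19: If (ψ₁, ψ₂) is a nowhere-vanishing solution of the Dirac system
∂̄ψ₁ = u ψ₂, ∂ψ₂ = −u ψ₁ on a connected open U ⊆ ℂ with u real-valued, then the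
ℝ³-valued Weierstrass 1-form ω with components Re[(ψ̄₂² − ψ₁²)dz],
Im[(ψ̄₂² + ψ₁²)dz], 2Re[ψ̄₂ψ₁ dz] is closed.  For a complex function g, the real
1-form Re(g dz) is closed iff Im(∂̄g) = 0 and Im(g dz) is closed iff Re(∂̄g) = 0,
which is how dω = 0 is expressed below. -/
theorem stmt19 (U : Set ℂ) (hU : IsOpen U) (hUconn : IsConnected U)
    (u : ℂ → ℝ)
    (ψ₁ ψ₂ : ℂ → ℂ) (hψ₁ : ContDiffOn ℝ 2 ψ₁ U) (hψ₂ : ContDiffOn ℝ 2 ψ₂ U)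
    (hvan : ∀ z ∈ U, ψ₁ z ≠ 0 ∨ ψ₂ z ≠ 0)
    (hdirac₁ : ∀ z ∈ U, dzbar ψ₁ z = (u z : ℂ) * ψ₂ z)
    (hdirac₂ : ∀ z ∈ U, dz ψ₂ z = -(u z : ℂ) * ψ₁ z) :
    ∀ z ∈ U,
      -- d(Re[(ψ̄₂² − ψ₁²) dz]) = 0 :
      (dzbar (fun w => (starRingEnd ℂ (ψ₂ w)) ^ 2 - (ψ₁ w) ^ 2) z).im = 0 ∧
      -- d(Im[(ψ̄₂² + ψ₁²) dz]) = 0 :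
      (dzbar (fun w => (starRingEnd ℂ (ψ₂ w)) ^ 2 + (ψ₁ w) ^ 2) z).re = 0 ∧
      -- d(2 Re[ψ̄₂ ψ₁ dz]) = 0 :
      (dzbar (fun w => 2 * starRingEnd ℂ (ψ₂ w) * ψ₁ w) z).im = 0 := by
  intro z hz
  have h1 : DifferentiableAt ℝ ψ₁ z :=
    (hψ₁.contDiffAt (hU.mem_nhds hz)).differentiableAt (by norm_num)
  have h2 : DifferentiableAt ℝ ψ₂ z :=
    (hψ₂.contDiffAt (hU.mem_nhds hz)).differentiableAt (by norm_num)
  have h2c : DifferentiableAt ℝ (fun w => starRingEnd ℂ (ψ₂ w)) z :=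
    Complex.conjCLE.differentiableAt.comp z h2
  -- ∂̄(ψ̄₂²) = 2 ψ̄₂ conj(∂ψ₂) = -2u ψ̄₂ ψ̄₁
  have e2 : dzbar (fun w => (starRingEnd ℂ (ψ₂ w)) ^ 2) z
      = -2 * (u z : ℂ) * starRingEnd ℂ (ψ₂ z) * starRingEnd ℂ (ψ₁ z) := by
    have := dzbar_mul h2c h2c
    simp only [← pow_two] at this
    rw [this, dzbar_conj h2, hdirac₂ z hz]
    simp only [map_mul, map_neg, Complex.conj_ofReal]
    ring
  -- ∂̄(ψ₁²) = 2 ψ₁ ∂̄ψ₁ = 2u ψ₁ ψ₂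
  have e1 : dzbar (fun w => (ψ₁ w) ^ 2) z = 2 * (u z : ℂ) * ψ₁ z * ψ₂ z := by
    have := dzbar_mul h1 h1
    simp only [← pow_two] at this
    rw [this, hdirac₁ z hz]
    ring
  -- ∂̄(2 ψ̄₂ ψ₁)
  have e3 : dzbar (fun w => 2 * starRingEnd ℂ (ψ₂ w) * ψ₁ w) z
      = 2 * ((u z : ℂ) * (starRingEnd ℂ (ψ₂ z) * ψ₂ z
        - starRingEnd ℂ (ψ₁ z) * ψ₁ z)) := by
    have hd : DifferentiableAt ℝ (fun w => (2:ℂ) * starRingEnd ℂ (ψ₂ w)) z :=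
      h2c.const_mul 2
    have h2' : dzbar (fun w => (2:ℂ) * starRingEnd ℂ (ψ₂ w)) z
        = 2 * starRingEnd ℂ (dz ψ₂ z) := by
      have := dzbar_mul (differentiableAt_const (2:ℂ)) h2c
      rw [this, dzbar_conj h2]
      simp [dzbar, fderiv_const]
    have := dzbar_mul hd h1
    simp only [mul_assoc] at this ⊢
    rw [this, h2', hdirac₁ z hz, hdirac₂ z hz]
    simp only [map_mul, map_neg, Complex.conj_ofReal]
    ring
  refine ⟨?_, ?_, ?_⟩
  · rw [dzbar_sub (f := fun w => (starRingEnd ℂ (ψ₂ w)) ^ 2) (g := fun w => (ψ₁ w) ^ 2) (h2c.pow 2) (h1.pow 2), e1, e2]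
    have : (-2 * (u z : ℂ) * starRingEnd ℂ (ψ₂ z) * starRingEnd ℂ (ψ₁ z)
        - 2 * (u z : ℂ) * ψ₁ z * ψ₂ z)
        = -2 * (u z : ℂ) * (starRingEnd ℂ (ψ₁ z * ψ₂ z) + ψ₁ z * ψ₂ z) := by
      simp only [map_mul]; ring
    rw [this]
    simp [Complex.add_im, Complex.mul_im, Complex.conj_im, Complex.conj_re]
    exact Or.inr (by ring)
  · rw [dzbar_add (f := fun w => (starRingEnd ℂ (ψ₂ w)) ^ 2) (g := fun w => (ψ₁ w) ^ 2) (h2c.pow 2) (h1.pow 2), e1, e2]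
    have : (-2 * (u z : ℂ) * starRingEnd ℂ (ψ₂ z) * starRingEnd ℂ (ψ₁ z)
        + 2 * (u z : ℂ) * ψ₁ z * ψ₂ z)
        = 2 * (u z : ℂ) * (ψ₁ z * ψ₂ z - starRingEnd ℂ (ψ₁ z * ψ₂ z)) := by
      simp only [map_mul]; ring
    rw [this]
    simp [Complex.sub_re, Complex.mul_re, Complex.conj_im, Complex.conj_re]
  · rw [e3]
    simp [Complex.mul_im, Complex.sub_im, Complex.mul_re, Complex.conj_im,
      Complex.conj_re]
    exact Or.inr (by ring)
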